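/- Grid stability: with grids of mesh ε, if d_H(Gr(h), Gr(h')) ≤ ε in the L∞ metric, then the gridded correspondences satisfy F^h_ε ⊆ (F^{h'}_ε)_ε and F^{h'}_ε ⊆ (F^h_ε)_ε, i.e. d_H(F^h_ε, F^{h'}_ε) ≤ ε, and the resulting ℝ-persistence modules M^h, M^{h'} of the grid filtrations satisfy d_I(M^h, M^{h'}) ≤ ε. -/

import Mathlib

open CategoryTheory EMetric ENNReal

noncomputable section

/-- Singular homology in degree `k` with coefficients in the field `K`. -/
def SingH (K : Type) [Field K] (k : ℕ) : TopCat.{0} ⥤ ModuleCat.{0} K :=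
  TopCat.toSSet ⋙ ((SimplicialObject.whiskering _ _).obj (ModuleCat.free K)) ⋙
    AlgebraicTopology.alternatingFaceMapComplex _ ⋙
    HomologicalComplex.homologyFunctor _ _ k

/-- An `ℝ`-persistence module (the data of modules and transition maps). -/
structure PersData (K : Type) [Field K] where
  Mod : ℝ → ModuleCat.{0} K
  tr : ∀ {r s : ℝ}, r ≤ s → (Mod r ⟶ Mod s)

/-- A `δ`-interleaving between `ℝ`-persistence modules: morphisms `f : M → N(δ)` and
`g : N → M(δ)` (natural with respect to the transition maps) whose composites are the
`2δ`-transition morphisms. -/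
def Interleaved (K : Type) [Field K] (M N : PersData K) (δ : ℝ) : Prop :=
  ∃ hδ : 0 ≤ δ, ∃ (f : ∀ r : ℝ, M.Mod r ⟶ N.Mod (r + δ)) (g : ∀ r : ℝ, N.Mod r ⟶ M.Mod (r + δ)),
    (∀ r s (h : r ≤ s), f r ≫ N.tr (by linarith : r + δ ≤ s + δ) = M.tr h ≫ f s) ∧
    (∀ r s (h : r ≤ s), g r ≫ M.tr (by linarith : r + δ ≤ s + δ) = N.tr h ≫ g s) ∧
    (∀ r : ℝ, f r ≫ g (r + δ) = M.tr (by linarith [hδ] : r ≤ r + δ + δ)) ∧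
    (∀ r : ℝ, g r ≫ f (r + δ) = N.tr (by linarith [hδ] : r ≤ r + δ + δ))

/-- The interleaving distance between `ℝ`-persistence modules. -/
def dI (K : Type) [Field K] (M N : PersData K) : ℝ≥0∞ :=
  sInf {e | ∃ δ : ℝ, e = ENNReal.ofReal δ ∧ Interleaved K M N δ}

/-- A filtration of correspondences: for each `r ∈ ℝ` a correspondence `Gf r ⊆ α × β` with
the domain-side spaces `Xf r`, codomain-side spaces `Yf r`, all increasing in `r`, such
that the projections restrict to maps `Xf r ← Gf r → Yf r`. -/
structure FiltCorr (α β : Type) [TopologicalSpace α] [TopologicalSpace β] where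
  Xf : ℝ → Set α
  Gf : ℝ → Set (α × β)
  Yf : ℝ → Set β
  monoX : ∀ {r s : ℝ}, r ≤ s → Xf r ⊆ Xf s
  monoG : ∀ {r s : ℝ}, r ≤ s → Gf r ⊆ Gf s
  monoY : ∀ {r s : ℝ}, r ≤ s → Yf r ⊆ Yf s
  projX : ∀ r, ∀ z ∈ Gf r, z.1 ∈ Xf r
  projY : ∀ r, ∀ z ∈ Gf r, z.2 ∈ Yf r

variable {α β : Type} [TopologicalSpace α] [TopologicalSpace β]

/-- The first projection `Gf r → Xf r`, as a map of spaces. -/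
def FiltCorr.pMor (F : FiltCorr α β) (r : ℝ) : TopCat.of (F.Gf r) ⟶ TopCat.of (F.Xf r) :=
  TopCat.ofHom ⟨fun z => ⟨z.1.1, F.projX r _ z.2⟩,
    Continuous.subtype_mk (continuous_fst.comp continuous_subtype_val) _⟩

/-- The second projection `Gf r → Yf r`, as a map of spaces. -/
def FiltCorr.qMor (F : FiltCorr α β) (r : ℝ) : TopCat.of (F.Gf r) ⟶ TopCat.of (F.Yf r) :=
  TopCat.ofHom ⟨fun z => ⟨z.1.2, F.projY r _ z.2⟩,
    Continuous.subtype_mk (continuous_snd.comp continuous_subtype_val) _⟩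

/-- The inclusion `Gf r ⊆ Gf s`, as a map of spaces. -/
def FiltCorr.iG (F : FiltCorr α β) {r s : ℝ} (h : r ≤ s) :
    TopCat.of (F.Gf r) ⟶ TopCat.of (F.Gf s) :=
  TopCat.ofHom ⟨Set.inclusion (F.monoG h), continuous_inclusion _⟩

/-- The inclusion `Xf r ⊆ Xf s`, as a map of spaces. -/
def FiltCorr.iX (F : FiltCorr α β) {r s : ℝ} (h : r ≤ s) :
    TopCat.of (F.Xf r) ⟶ TopCat.of (F.Xf s) :=
  TopCat.ofHom ⟨Set.inclusion (F.monoX h), continuous_inclusion _⟩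

/-- The inclusion `Yf r ⊆ Yf s`, as a map of spaces. -/
def FiltCorr.iY (F : FiltCorr α β) {r s : ℝ} (h : r ≤ s) :
    TopCat.of (F.Yf r) ⟶ TopCat.of (F.Yf s) :=
  TopCat.ofHom ⟨Set.inclusion (F.monoY h), continuous_inclusion _⟩

variable (K : Type) [Field K] (k : ℕ)

/-- The submodule `ker p₋ ⊔ ker q₋` of `H(Gf r)`: under an interval decomposition of the
`A₃(bf)` representation `H(Xf r) ← H(Gf r) → H(Yf r)` it is exactly the sum of all
summands other than `I[1,3]`, so the quotient by it is the multiplicity space of the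
interval `I[1,3]`. -/
def FiltCorr.ker13 (F : FiltCorr α β) (r : ℝ) :
    Submodule K ((SingH K k).obj (TopCat.of (F.Gf r))) :=
  LinearMap.ker ((SingH K k).map (F.pMor r)).hom ⊔ LinearMap.ker ((SingH K k).map (F.qMor r)).hom

lemma FiltCorr.p_comm (F : FiltCorr α β) {r s : ℝ} (h : r ≤ s) :
    F.iG h ≫ F.pMor s = F.pMor r ≫ F.iX h := by ext x; rfl

lemma FiltCorr.q_comm (F : FiltCorr α β) {r s : ℝ} (h : r ≤ s) :
    F.iG h ≫ F.qMor s = F.qMor r ≫ F.iY h := by ext x; rfl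

lemma FiltCorr.ker13_le (F : FiltCorr α β) {r s : ℝ} (h : r ≤ s) :
    F.ker13 K k r ≤ (F.ker13 K k s).comap ((SingH K k).map (F.iG h)).hom := by
  refine sup_le ?_ ?_
  · intro u hu
    refine Submodule.mem_comap.2 (Submodule.mem_sup_left (LinearMap.mem_ker.2 ?_))
    have e : (SingH K k).map (F.iG h) ≫ (SingH K k).map (F.pMor s) =
        (SingH K k).map (F.pMor r) ≫ (SingH K k).map (F.iX h) := by
      rw [← Functor.map_comp, ← Functor.map_comp, FiltCorr.p_comm]
    have e' : ((SingH K k).map (F.pMor s)).hom (((SingH K k).map (F.iG h)).hom u) =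
        ((SingH K k).map (F.iX h)).hom (((SingH K k).map (F.pMor r)).hom u) := by
      change ((SingH K k).map (F.iG h) ≫ (SingH K k).map (F.pMor s)).hom u = _
      rw [e]; rfl
    rw [e', LinearMap.mem_ker.1 hu, map_zero]
  · intro u hu
    refine Submodule.mem_comap.2 (Submodule.mem_sup_right (LinearMap.mem_ker.2 ?_))
    have e : (SingH K k).map (F.iG h) ≫ (SingH K k).map (F.qMor s) =
        (SingH K k).map (F.qMor r) ≫ (SingH K k).map (F.iY h) := by
      rw [← Functor.map_comp, ← Functor.map_comp, FiltCorr.q_comm]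
    have e' : ((SingH K k).map (F.qMor s)).hom (((SingH K k).map (F.iG h)).hom u) =
        ((SingH K k).map (F.iY h)).hom (((SingH K k).map (F.qMor r)).hom u) := by
      change ((SingH K k).map (F.iG h) ≫ (SingH K k).map (F.qMor s)).hom u = _
      rw [e]; rfl
    rw [e', LinearMap.mem_ker.1 hu, map_zero]

/-- The `ℝ`-persistence module of the filtration of correspondences `F`: at each radius the
`I[1,3]`-multiplicity space `H(Gf r) ⧸ (ker p₋ ⊔ ker q₋)` of the `A₃(bf)` representation
`H(Xf r) ← H(Gf r) → H(Yf r)`, with transition maps induced by the inclusions. -/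
def FiltCorr.pers (F : FiltCorr α β) : PersData K where
  Mod r := ModuleCat.of K ((SingH K k).obj (TopCat.of (F.Gf r)) ⧸ F.ker13 K k r)
  tr {r s} h := ModuleCat.ofHom
    (Submodule.mapQ (F.ker13 K k r) (F.ker13 K k s) ((SingH K k).map (F.iG h)).hom
      (F.ker13_le K k h))

end

noncomputable section

/-- `ℝⁿ` with the `L∞` (sup) metric. -/
abbrev Linf (n : ℕ) := Fin n → ℝ

/-- The closed `r`-offset of a set. -/
def off {γ : Type} [PseudoEMetricSpace γ] (A : Set γ) (r : ℝ≥0∞) : Set γ :=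
  {x | infEdist x A ≤ r}

/-- The graph of a sampled map `h : S → ℝⁿ`. -/
def gr {n : ℕ} {S : Set (Linf n)} (h : S → Linf n) : Set (Linf n × Linf n) :=
  Set.range fun s : S => ((s : Linf n), h s)

/-- The closed `ε`-cube of the grid with corner `ε • a`, `a ∈ ℤⁿ`. -/
def cube {n : ℕ} (ε : ℝ) (a : Fin n → ℤ) : Set (Linf n) :=
  {x | ∀ i, (a i : ℝ) * ε ≤ x i ∧ x i ≤ ((a i : ℝ) + 1) * ε}

/-- The gridded correspondence `F^h_ε`: the union of all products `X' × Y'` of `ε`-cubes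
of the grids meeting the graph of the sampled map `h`. -/
def gridCorr {n : ℕ} (ε : ℝ) {S : Set (Linf n)} (h : S → Linf n) :
    Set (Linf n × Linf n) :=
  {z | ∃ aX aY : Fin n → ℤ, z.1 ∈ cube ε aX ∧ z.2 ∈ cube ε aY ∧
    ∃ s : S, (s : Linf n) ∈ cube ε aX ∧ h s ∈ cube ε aY}

/-- The grid filtration, extended to a right-continuous step filtration over `ℝ`:
at radius `r` it is the `iε`-offset `F_{iε} = (F^h_ε)_{iε}` for the largest `i ≥ 1` with
`iε ≤ r` (and empty for `r < ε`). -/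
def stepSet {n : ℕ} (ε : ℝ) (A : Set (Linf n × Linf n)) (r : ℝ) :
    Set (Linf n × Linf n) :=
  ⋃ i : ℕ, ⋃ (_ : 1 ≤ i ∧ (i : ℝ) * ε ≤ r), off A (ENNReal.ofReal ((i : ℝ) * ε))

/-- The filtration of correspondences `{p(F_{iε}) ← F_{iε} → q(F_{iε})}` of the gridded
sampled map. -/
def gridFilt {n : ℕ} (ε : ℝ) {S : Set (Linf n)} (h : S → Linf n) :
    FiltCorr (Linf n) (Linf n) where
  Xf r := Prod.fst '' stepSet ε (gridCorr ε h) r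
  Gf r := stepSet ε (gridCorr ε h) r
  Yf r := Prod.snd '' stepSet ε (gridCorr ε h) r
  monoX hrs := Set.image_mono (by
    intro x hx
    simp only [stepSet, Set.mem_iUnion] at hx ⊢
    obtain ⟨i, ⟨h1, h2⟩, hx⟩ := hx
    exact ⟨i, ⟨h1, h2.trans hrs⟩, hx⟩)
  monoG hrs := by
    intro x hx
    simp only [stepSet, Set.mem_iUnion] at hx ⊢
    obtain ⟨i, ⟨h1, h2⟩, hx⟩ := hx
    exact ⟨i, ⟨h1, h2.trans hrs⟩, hx⟩
  monoY hrs := Set.image_mono (by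
    intro x hx
    simp only [stepSet, Set.mem_iUnion] at hx ⊢
    obtain ⟨i, ⟨h1, h2⟩, hx⟩ := hx
    exact ⟨i, ⟨h1, h2.trans hrs⟩, hx⟩)
  projX r z hz := Set.mem_image_of_mem _ hz
  projY r z hz := Set.mem_image_of_mem _ hz

/-- The `ℝ`-persistence module of the gridded sampled map: at each radius, the multiplicity
space of the interval `I[1,3]` in the interval decomposition of the `A₃(bf)` representation
`H(p(F_{iε})) ← H(F_{iε}) → H(q(F_{iε}))`, with induced transition maps. -/
def gridPers (K : Type) [Field K] (k : ℕ) {n : ℕ} (ε : ℝ) {S : Set (Linf n)}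
    (h : S → Linf n) : PersData K :=
  (gridFilt ε h).pers K k


section GridStabilityAux

open Metric EMetric ENNReal

variable {α β : Type} [TopologicalSpace α] [TopologicalSpace β] (K : Type) [Field K] (k : ℕ)

/-- Inclusion between the graph-spaces of two filtrations of correspondences. -/
def inclG (F F' : FiltCorr α β) {r s : ℝ} (hG : F.Gf r ⊆ F'.Gf s) :
    TopCat.of (F.Gf r) ⟶ TopCat.of (F'.Gf s) :=
  TopCat.ofHom ⟨Set.inclusion hG, continuous_inclusion _⟩

def inclX (F F' : FiltCorr α β) {r s : ℝ} (hX : F.Xf r ⊆ F'.Xf s) :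
    TopCat.of (F.Xf r) ⟶ TopCat.of (F'.Xf s) :=
  TopCat.ofHom ⟨Set.inclusion hX, continuous_inclusion _⟩

def inclY (F F' : FiltCorr α β) {r s : ℝ} (hY : F.Yf r ⊆ F'.Yf s) :
    TopCat.of (F.Yf r) ⟶ TopCat.of (F'.Yf s) :=
  TopCat.ofHom ⟨Set.inclusion hY, continuous_inclusion _⟩

lemma ker13_le2 (F F' : FiltCorr α β) {r s : ℝ} (hG : F.Gf r ⊆ F'.Gf s)
    (hX : F.Xf r ⊆ F'.Xf s) (hY : F.Yf r ⊆ F'.Yf s) :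
    F.ker13 K k r ≤ (F'.ker13 K k s).comap ((SingH K k).map (inclG F F' hG)).hom := by
  refine sup_le ?_ ?_
  · intro u hu
    refine Submodule.mem_comap.2 (Submodule.mem_sup_left (LinearMap.mem_ker.2 ?_))
    have e : (SingH K k).map (inclG F F' hG) ≫ (SingH K k).map (F'.pMor s) =
        (SingH K k).map (F.pMor r) ≫ (SingH K k).map (inclX F F' hX) := by
      rw [← Functor.map_comp, ← Functor.map_comp]; congr 1
    have e' : ((SingH K k).map (F'.pMor s)).hom (((SingH K k).map (inclG F F' hG)).hom u) =
        ((SingH K k).map (inclX F F' hX)).hom (((SingH K k).map (F.pMor r)).hom u) := by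
      change ((SingH K k).map (inclG F F' hG) ≫ (SingH K k).map (F'.pMor s)).hom u = _
      rw [e]; rfl
    rw [e', LinearMap.mem_ker.1 hu, map_zero]
  · intro u hu
    refine Submodule.mem_comap.2 (Submodule.mem_sup_right (LinearMap.mem_ker.2 ?_))
    have e : (SingH K k).map (inclG F F' hG) ≫ (SingH K k).map (F'.qMor s) =
        (SingH K k).map (F.qMor r) ≫ (SingH K k).map (inclY F F' hY) := by
      rw [← Functor.map_comp, ← Functor.map_comp]; congr 1
    have e' : ((SingH K k).map (F'.qMor s)).hom (((SingH K k).map (inclG F F' hG)).hom u) =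
        ((SingH K k).map (inclY F F' hY)).hom (((SingH K k).map (F.qMor r)).hom u) := by
      change ((SingH K k).map (inclG F F' hG) ≫ (SingH K k).map (F'.qMor s)).hom u = _
      rw [e]; rfl
    rw [e', LinearMap.mem_ker.1 hu, map_zero]

/-- The map of persistence modules induced by an inclusion of filtrations. -/
def persMap (F F' : FiltCorr α β) {r s : ℝ} (hG : F.Gf r ⊆ F'.Gf s)
    (hX : F.Xf r ⊆ F'.Xf s) (hY : F.Yf r ⊆ F'.Yf s) :
    (F.pers K k).Mod r ⟶ (F'.pers K k).Mod s :=
  ModuleCat.ofHom (Submodule.mapQ _ _ ((SingH K k).map (inclG F F' hG)).hom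
    (ker13_le2 K k F F' hG hX hY))

lemma persMap_comp (F F' F'' : FiltCorr α β) {r s t : ℝ}
    (hG1 : F.Gf r ⊆ F'.Gf s) (hX1 : F.Xf r ⊆ F'.Xf s) (hY1 : F.Yf r ⊆ F'.Yf s)
    (hG2 : F'.Gf s ⊆ F''.Gf t) (hX2 : F'.Xf s ⊆ F''.Xf t) (hY2 : F'.Yf s ⊆ F''.Yf t) :
    persMap K k F F' hG1 hX1 hY1 ≫ persMap K k F' F'' hG2 hX2 hY2 =
      persMap K k F F'' (hG1.trans hG2) (hX1.trans hX2) (hY1.trans hY2) := by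
  refine ModuleCat.hom_ext (LinearMap.ext fun u => ?_)
  obtain ⟨v, rfl⟩ := Submodule.Quotient.mk_surjective _ u
  simp only [persMap, ModuleCat.hom_comp, ModuleCat.hom_ofHom, LinearMap.comp_apply,
    Submodule.mapQ_apply]
  have e : (SingH K k).map (inclG F F' hG1) ≫ (SingH K k).map (inclG F' F'' hG2) =
      (SingH K k).map (inclG F F'' (hG1.trans hG2)) := by
    rw [← Functor.map_comp]; congr 1
  exact congrArg _ (congrArg (fun f => ModuleCat.Hom.hom f v) e)

lemma interleaved_of_incl (F F' : FiltCorr α β) {δ : ℝ} (hδ : 0 ≤ δ)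
    (hG : ∀ r, F.Gf r ⊆ F'.Gf (r + δ)) (hG' : ∀ r, F'.Gf r ⊆ F.Gf (r + δ))
    (hX : ∀ r, F.Xf r ⊆ F'.Xf (r + δ)) (hX' : ∀ r, F'.Xf r ⊆ F.Xf (r + δ))
    (hY : ∀ r, F.Yf r ⊆ F'.Yf (r + δ)) (hY' : ∀ r, F'.Yf r ⊆ F.Yf (r + δ)) :
    Interleaved K (F.pers K k) (F'.pers K k) δ := by
  refine ⟨hδ, fun r => persMap K k F F' (hG r) (hX r) (hY r),
      fun r => persMap K k F' F (hG' r) (hX' r) (hY' r), ?_, ?_, ?_, ?_⟩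
  · intro r s hrs
    exact (persMap_comp K k F F' F' (hG r) (hX r) (hY r)
        (F'.monoG (add_le_add_left hrs δ)) (F'.monoX (add_le_add_left hrs δ))
        (F'.monoY (add_le_add_left hrs δ))).trans
      (persMap_comp K k F F F' (F.monoG hrs) (F.monoX hrs) (F.monoY hrs)
        (hG s) (hX s) (hY s)).symm
  · intro r s hrs
    exact (persMap_comp K k F' F F (hG' r) (hX' r) (hY' r)
        (F.monoG (add_le_add_left hrs δ)) (F.monoX (add_le_add_left hrs δ))
        (F.monoY (add_le_add_left hrs δ))).trans
      (persMap_comp K k F' F' F (F'.monoG hrs) (F'.monoX hrs) (F'.monoY hrs)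
        (hG' s) (hX' s) (hY' s)).symm
  · intro r
    exact persMap_comp K k F F' F (hG r) (hX r) (hY r)
      (hG' (r + δ)) (hX' (r + δ)) (hY' (r + δ))
  · intro r
    exact persMap_comp K k F' F F' (hG' r) (hX' r) (hY' r)
      (hG (r + δ)) (hX (r + δ)) (hY (r + δ))

lemma stepSet_subset {n : ℕ} {ε : ℝ} (hε : 0 < ε) {A B : Set (Linf n × Linf n)}
    (hAB : hausdorffEdist A B ≤ ENNReal.ofReal ε) (r : ℝ) :
    stepSet ε A r ⊆ stepSet ε B (r + ε) := by
  intro x hx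
  simp only [stepSet, Set.mem_iUnion] at hx ⊢
  obtain ⟨i, ⟨h1, h2⟩, hx⟩ := hx
  refine ⟨i + 1, ⟨h1.trans (Nat.le_succ i), by push_cast; linarith⟩, ?_⟩
  show infEdist x B ≤ _
  calc infEdist x B ≤ infEdist x A + hausdorffEdist A B :=
        infEdist_le_infEdist_add_hausdorffEdist
    _ ≤ ENNReal.ofReal ((i : ℝ) * ε) + ENNReal.ofReal ε := add_le_add hx hAB
    _ = ENNReal.ofReal ((↑(i + 1) : ℝ) * ε) := by
        rw [← ENNReal.ofReal_add (by positivity) hε.le]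
        push_cast
        ring_nf

lemma key1 {ε : ℝ} (hε : 0 < ε) (a : ℤ) {x s s' : ℝ}
    (hx1 : (a : ℝ) * ε ≤ x) (hx2 : x ≤ ((a : ℝ) + 1) * ε)
    (hs1 : (a : ℝ) * ε ≤ s) (hs2 : s ≤ ((a : ℝ) + 1) * ε)
    (hss : |s - s'| ≤ ε) :
    ∃ (a' : ℤ) (w : ℝ), ((a' : ℝ) * ε ≤ w ∧ w ≤ ((a' : ℝ) + 1) * ε) ∧
      ((a' : ℝ) * ε ≤ s' ∧ s' ≤ ((a' : ℝ) + 1) * ε) ∧ |x - w| ≤ ε := by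
  rw [abs_le] at hss
  obtain ⟨hl, hr⟩ := hss
  rcases lt_or_ge s' ((a : ℝ) * ε) with hc | hc
  · refine ⟨a - 1, (a : ℝ) * ε, ⟨?_, ?_⟩, ⟨?_, ?_⟩, ?_⟩
    · push_cast; nlinarith
    · push_cast; nlinarith
    · push_cast; nlinarith
    · push_cast; nlinarith
    · rw [abs_le]; constructor <;> nlinarith
  · rcases le_or_gt s' (((a : ℝ) + 1) * ε) with hc2 | hc2
    · refine ⟨a, x, ⟨hx1, hx2⟩, ⟨hc, hc2⟩, ?_⟩
      rw [sub_self, abs_zero]; exact hε.le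
    · refine ⟨a + 1, ((a : ℝ) + 1) * ε, ⟨?_, ?_⟩, ⟨?_, ?_⟩, ?_⟩
      · push_cast; nlinarith
      · push_cast; nlinarith
      · push_cast; nlinarith
      · push_cast; nlinarith
      · rw [abs_le]; constructor <;> nlinarith

lemma gridCorr_subset_off {n : ℕ} {ε : ℝ} (hε : 0 < ε) {S S' : Set (Linf n)}
    (hS' : S'.Finite) (h : S → Linf n) (h' : S' → Linf n)
    (hd : hausdorffEdist (gr h) (gr h') ≤ ENNReal.ofReal ε) :
    gridCorr ε h ⊆ off (gridCorr ε h') (ENNReal.ofReal ε) := by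
  rintro z ⟨aX, aY, hz1, hz2, s, hsX, hsY⟩
  have hmem : ((s : Linf n), h s) ∈ gr h := ⟨s, rfl⟩
  have hinf : infEdist ((s : Linf n), h s) (gr h') ≤ ENNReal.ofReal ε :=
    (infEdist_le_hausdorffEdist_of_mem hmem).trans hd
  have hfinty : Finite ↥S' := hS'.to_subtype
  have hfin : (gr h').Finite := Set.finite_range _
  have hne : (gr h').Nonempty := by
    rcases Set.eq_empty_or_nonempty (gr h') with he | hne
    · rw [he, show infEdist ((s : Linf n), h s) (∅ : Set (Linf n × Linf n)) = ⊤ from infEDist_empty] at hinf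
      exact absurd (top_le_iff.1 hinf) ENNReal.ofReal_ne_top
    · exact hne
  obtain ⟨q, hq, heq⟩ := hfin.isCompact.exists_infEdist_eq_edist hne ((s : Linf n), h s)
  rw [show infEdist ((s : Linf n), h s) (gr h') = _ from heq] at hinf
  obtain ⟨s', rfl⟩ := hq
  rw [Prod.edist_eq, max_le_iff] at hinf
  have hd1 : ∀ i, |(s : Linf n) i - (s' : Linf n) i| ≤ ε := fun i => by
    have h2 := (edist_le_pi_edist (s : Linf n) (s' : Linf n) i).trans hinf.1
    rwa [edist_le_ofReal hε.le, Real.dist_eq] at h2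
  have hd2 : ∀ i, |h s i - h' s' i| ≤ ε := fun i => by
    have h2 := (edist_le_pi_edist (h s) (h' s') i).trans hinf.2
    rwa [edist_le_ofReal hε.le, Real.dist_eq] at h2
  choose aX' w1 hw1 hws1 hxw1 using fun i =>
    key1 hε (aX i) (hz1 i).1 (hz1 i).2 (hsX i).1 (hsX i).2 (hd1 i)
  choose aY' w2 hw2 hws2 hxw2 using fun i =>
    key1 hε (aY i) (hz2 i).1 (hz2 i).2 (hsY i).1 (hsY i).2 (hd2 i)
  have hwmem : ((w1, w2) : Linf n × Linf n) ∈ gridCorr ε h' :=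
    ⟨aX', aY', fun i => hw1 i, fun i => hw2 i, s', fun i => hws1 i, fun i => hws2 i⟩
  show infEdist z (gridCorr ε h') ≤ ENNReal.ofReal ε
  refine le_trans (infEdist_le_edist_of_mem hwmem) ?_
  rw [Prod.edist_eq, max_le_iff]
  constructor <;> refine edist_pi_le_iff.2 fun i => ?_
  · rw [edist_le_ofReal hε.le, Real.dist_eq]; exact hxw1 i
  · rw [edist_le_ofReal hε.le, Real.dist_eq]; exact hxw2 i

end GridStabilityAux

/-- Grid stability: with grids of mesh `ε`, if
`d_H(Gr(h), Gr(h')) ≤ ε` in the `L∞` metric, then the gridded correspondences satisfy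
`F^h_ε ⊆ (F^{h'}_ε)_ε` and `F^{h'}_ε ⊆ (F^h_ε)_ε`, i.e. `d_H(F^h_ε, F^{h'}_ε) ≤ ε`, and
the resulting `ℝ`-persistence modules satisfy `d_I(M^h, M^{h'}) ≤ ε`. -/
theorem grid_stability (K : Type) [Field K] (k : ℕ) {n : ℕ} (ε : ℝ) (hε : 0 < ε)
    {S S' : Set (Linf n)} (hS : S.Finite) (hS' : S'.Finite)
    (h : S → Linf n) (h' : S' → Linf n)
    (hd : hausdorffEdist (gr h) (gr h') ≤ ENNReal.ofReal ε) :
    gridCorr ε h ⊆ off (gridCorr ε h') (ENNReal.ofReal ε) ∧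
    gridCorr ε h' ⊆ off (gridCorr ε h) (ENNReal.ofReal ε) ∧
    hausdorffEdist (gridCorr ε h) (gridCorr ε h') ≤ ENNReal.ofReal ε ∧
    dI K (gridPers K k ε h) (gridPers K k ε h') ≤ ENNReal.ofReal ε := by
  have p1 := gridCorr_subset_off hε hS' h h' hd
  have p2 := gridCorr_subset_off hε hS h' h (by exact Metric.hausdorffEDist_comm.trans_le hd)
  have p3 : hausdorffEdist (gridCorr ε h) (gridCorr ε h') ≤ ENNReal.ofReal ε :=
    hausdorffEdist_le_of_infEdist (fun x hx => p1 hx) (fun x hx => p2 hx)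
  have p3' : hausdorffEdist (gridCorr ε h') (gridCorr ε h) ≤ ENNReal.ofReal ε := by
    exact Metric.hausdorffEDist_comm.trans_le p3
  refine ⟨p1, p2, p3, ?_⟩
  have hint : Interleaved K (gridPers K k ε h) (gridPers K k ε h') ε :=
    interleaved_of_incl K k (gridFilt ε h) (gridFilt ε h') hε.le
      (fun r => stepSet_subset hε p3 r) (fun r => stepSet_subset hε p3' r)
      (fun r => Set.image_mono (stepSet_subset hε p3 r))
      (fun r => Set.image_mono (stepSet_subset hε p3' r))
      (fun r => Set.image_mono (stepSet_subset hε p3 r))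
      (fun r => Set.image_mono (stepSet_subset hε p3' r))
  exact sInf_le ⟨ε, rfl, hint⟩


end
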